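/- Let G be a finite Galois group of a field extension K/L. A weak 2-cocycle is a map f : G × G → K satisfying σ(f(τ,ω))·f(σ, τω) = f(σ,τ)·f(στ,ω) and f(1,σ) = f(σ,1) = 1 for all σ,τ,ω ∈ G. Prove: if e : G × G → {0,1} ⊆ K is a weak 2-cocycle taking only values 0 and 1, then the operation x∘y := xy if e(x,y)=1 and x∘y := 0 if e(x,y)=0, extended by x∘0 = 0∘x = 0, makes G ∪ {0} into a monoid (i.e., ∘ is associative with identity 1). -/

import Mathlib

open Classical in
/-- The operation on `G ∪ {0}` determined by an idempotent weak 2-cocycle `e`: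
`x ∘ y = xy` if `e(x,y) = 1` and `x ∘ y = 0` otherwise, extended by
`x ∘ 0 = 0 ∘ x = 0`. -/
noncomputable def modOp {G : Type*} [Group G] {K : Type*} [Field K]
    (e : G → G → K) : WithZero G → WithZero G → WithZero G
  | some x, some y => if e x y = 0 then 0 else (some (x * y))
  | _, _ => 0

/-- Let `G` be the Galois group of a field extension, acting
on the field `K` by automorphisms, and let `e : G × G → {0,1} ⊆ K` be a weak
2-cocycle taking only the values `0` and `1`.  Then the operation
`x ∘ y = xy` if `e(x,y) = 1`, `x ∘ y = 0` if `e(x,y) = 0` (with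
`x ∘ 0 = 0 ∘ x = 0`) makes `G ∪ {0}` into a monoid: `∘` is associative with
identity `1`. -/
theorem modification_of_idempotent_weak_cocycle {G : Type*} [Group G]
    {K : Type*} [Field K] [MulSemiringAction G K]
    (e : G → G → K)
    (hval : ∀ σ τ : G, e σ τ = 0 ∨ e σ τ = 1)
    (hcoc : ∀ σ τ ω : G, σ • e τ ω * e σ (τ * ω) = e σ τ * e (σ * τ) ω)
    (hleft : ∀ σ : G, e 1 σ = 1) (hright : ∀ σ : G, e σ 1 = 1) :
    (∀ x y z : WithZero G, modOp (K := K) e (modOp (K := K) e x y) z =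
        modOp (K := K) e x (modOp (K := K) e y z)) ∧
      (∀ x : WithZero G, modOp (K := K) e ((1 : G) : WithZero G) x = x ∧
        modOp (K := K) e x ((1 : G) : WithZero G) = x) := by
  have key : ∀ σ τ ω : G, (e σ τ = 0 ∨ e (σ * τ) ω = 0) ↔
      (e τ ω = 0 ∨ e σ (τ * ω) = 0) := by
    intro σ τ ω
    have h := hcoc σ τ ω
    constructor
    · intro h'
      by_contra hc
      push_neg at hc
      have h1 : σ • e τ ω ≠ 0 := fun h0 => hc.1 (by
        have := congrArg (fun a => σ⁻¹ • a) h0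
        simpa using this)
      rcases h' with h' | h' <;> rw [h'] at h <;>
        [rw [zero_mul] at h; rw [mul_zero] at h] <;>
        rcases mul_eq_zero.mp h with h | h <;> first
          | exact h1 h | exact hc.1 h | exact hc.2 h
    · intro h'
      by_contra hc
      push_neg at hc
      rcases h' with h' | h'
      · have : σ • e τ ω = 0 := by rw [h']; simp
        rw [this, zero_mul] at h
        exact hc.1 ((mul_eq_zero.mp h.symm).resolve_right hc.2)
      · rw [h', mul_zero] at h
        exact hc.1 ((mul_eq_zero.mp h.symm).resolve_right hc.2)
  constructor
  · intro x y z
    match x, y, z with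
    | (0 : WithZero G), y, z => cases y <;> cases z <;> rfl
    | some x, (0 : WithZero G), z => cases z <;> rfl
    | some x, some y, (0 : WithZero G) =>
      have hz : ∀ a : WithZero G, modOp (K := K) e a 0 = 0 := fun a => by
        cases a <;> rfl
      rw [hz]; rfl
    | some x, some y, some z =>
      simp only [modOp]
      by_cases h1 : e x y = 0
      · have := (key x y z).mp (Or.inl h1)
        by_cases h2 : e y z = 0
        · simp [h1, h2]
        · have h3 : e x (y * z) = 0 := this.resolve_left h2
          simp [h1, h2, h3]
      · by_cases h2 : e (x * y) z = 0
        · have := (key x y z).mp (Or.inr h2)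
          rcases this with h3 | h3
          · simp [h1, h2, h3]
          · by_cases h4 : e y z = 0
            · simp [h1, h2, h4]
            · simp [h1, h2, h3, h4]
        · have := (key x y z).mpr
          have h3 : e y z ≠ 0 := fun h0 => (by
            rcases key x y z |>.mpr (Or.inl h0) with h | h <;> exact absurd h (by assumption))
          have h4 : e x (y * z) ≠ 0 := fun h0 => (by
            rcases key x y z |>.mpr (Or.inr h0) with h | h <;> exact absurd h (by assumption))
          simp [h1, h2, h3, h4, mul_assoc]
          rfl
  · intro x
    match x with
    | (0 : WithZero G) => exact ⟨rfl, rfl⟩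
    | some x =>
      constructor
      · show modOp (K := K) e (some 1) (some x) = some x
        simp [modOp, hleft x]
        rfl
      · show modOp (K := K) e (some x) (some 1) = some x
        simp [modOp, hright x]
        rfl
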